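/- For every ℓ ∈ ℕ, every Δ_ℓ set contains a Δ_ℓ set of zero upper Banach density. In particular, for ℓ = 1: every set of the form {n_j − n_i : i < j} for a strictly increasing sequence (n_k) in ℕ contains, for some subsequence (m_k), the difference set {m_j − m_i : i < j}, which has upper Banach density zero. -/

import Mathlib

/-- The iterated difference map: `del ℓ f` is `∂(f 0, ..., f (2^ℓ - 1))`. -/
def del : ℕ → (ℕ → ℤ) → ℤ
  | 0, f => f 0
  | (ℓ + 1), f => del ℓ (fun i => f (2 ^ ℓ + i)) - del ℓ f

/-- `D_ℓ((n_k))`: all values `∂(n_{k₁},...,n_{k_{2^ℓ}})` over `k₁ < ... < k_{2^ℓ}`. -/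
def Dset (ℓ : ℕ) (n : ℕ → ℤ) : Set ℤ :=
  {z | ∃ k : ℕ → ℕ, StrictMono k ∧ z = del ℓ (fun i => n (k i))}

/-- The upper Banach density `d*(A) = inf_N sup_M |A ∩ (M, M+N]| / N`. -/
noncomputable def upperBanachDensity (A : Set ℕ) : ℝ :=
  ⨅ N : {N : ℕ // 0 < N}, ⨆ M : ℕ, ((A ∩ Set.Ioc M (M + (N : ℕ))).ncard : ℝ) / (N : ℕ)

/-- signs of the iterated difference -/
def eps : ℕ → ℕ → ℤ
  | 0, _ => 1
  | (ℓ + 1), i => if i < 2 ^ ℓ then - eps ℓ i else eps ℓ (i - 2 ^ ℓ)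

lemma del_eq_sum (ℓ : ℕ) (f : ℕ → ℤ) :
    del ℓ f = ∑ i ∈ Finset.range (2 ^ ℓ), eps ℓ i * f i := by
  induction ℓ generalizing f with
  | zero => simp [del, eps]
  | succ ℓ ih =>
    rw [show del (ℓ + 1) f = del ℓ (fun i => f (2 ^ ℓ + i)) - del ℓ f from rfl, ih, ih,
      show (2 : ℕ) ^ (ℓ + 1) = 2 ^ ℓ + 2 ^ ℓ by ring, Finset.sum_range_add]
    have h1 : ∑ i ∈ Finset.range (2 ^ ℓ), eps (ℓ + 1) i * f i
        = ∑ i ∈ Finset.range (2 ^ ℓ), -(eps ℓ i * f i) := by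
      refine Finset.sum_congr rfl fun i hi => ?_
      rw [Finset.mem_range] at hi
      simp [eps, if_pos hi, neg_mul]
    have h2 : ∑ i ∈ Finset.range (2 ^ ℓ), eps (ℓ + 1) (2 ^ ℓ + i) * f (2 ^ ℓ + i)
        = ∑ i ∈ Finset.range (2 ^ ℓ), eps ℓ i * f (2 ^ ℓ + i) := by
      refine Finset.sum_congr rfl fun i hi => ?_
      have hni : ¬ (2 ^ ℓ + i < 2 ^ ℓ) := by omega
      simp [eps, if_neg hni]
    rw [h1, h2, Finset.sum_neg_distrib]
    ring

/-- Pigeonhole step: refine a strictly monotone sequence so that the values of `n`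
along it are all congruent mod `q`. -/
lemma step (n : ℕ → ℕ) (q : ℕ) (hq : 0 < q) (u : ℕ → ℕ) (hu : StrictMono u) :
    ∃ v : ℕ → ℕ, StrictMono v ∧ (∀ x, u x ≤ v x) ∧ Set.range v ⊆ Set.range u ∧
      ∀ x y, (q : ℤ) ∣ (n (v x) : ℤ) - (n (v y) : ℤ) := by
  obtain ⟨b, hb⟩ :=
    Finite.exists_infinite_fiber (fun x : ℕ => (⟨n (u x) % q, Nat.mod_lt _ hq⟩ : Fin q))
  set S : Set ℕ := (fun x : ℕ => (⟨n (u x) % q, Nat.mod_lt _ hq⟩ : Fin q)) ⁻¹' {b} with hS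
  have hSinf : S.Infinite := Set.infinite_coe_iff.mp hb
  set h : ℕ → ℕ := Nat.nth (· ∈ S) with hh
  have hmem : ∀ x, h x ∈ S := fun x => Nat.nth_mem_of_infinite hSinf x
  have hhm : StrictMono h := Nat.nth_strictMono hSinf
  refine ⟨fun x => u (h x), hu.comp hhm, fun x => hu.monotone (hhm.le_apply), ?_, ?_⟩
  · rintro _ ⟨x, rfl⟩; exact ⟨h x, rfl⟩
  · intro x y
    have hx : n (u (h x)) % q = (b : ℕ) := congrArg Fin.val (hmem x)
    have hy : n (u (h y)) % q = (b : ℕ) := congrArg Fin.val (hmem y)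
    exact Nat.ModEq.dvd (hy.trans hx.symm)

/-- The chain of nested subsequences. -/
noncomputable def chain (n : ℕ → ℕ) (Q : ℕ → ℕ) (hQ : ∀ k, 0 < Q k) :
    (k : ℕ) → {u : ℕ → ℕ // StrictMono u}
  | 0 => ⟨id, strictMono_id⟩
  | (k + 1) =>
    ⟨(step n (Q k) (hQ k) (chain n Q hQ k).1 (chain n Q hQ k).2).choose,
     (step n (Q k) (hQ k) (chain n Q hQ k).1 (chain n Q hQ k).2).choose_spec.1⟩

lemma chain_succ_spec (n : ℕ → ℕ) (Q : ℕ → ℕ) (hQ : ∀ k, 0 < Q k) (k : ℕ) :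
    (∀ x, (chain n Q hQ k).1 x ≤ (chain n Q hQ (k + 1)).1 x) ∧
    Set.range (chain n Q hQ (k + 1)).1 ⊆ Set.range (chain n Q hQ k).1 ∧
    ∀ x y, (Q k : ℤ) ∣
      (n ((chain n Q hQ (k + 1)).1 x) : ℤ) - (n ((chain n Q hQ (k + 1)).1 y) : ℤ) :=
  (step n (Q k) (hQ k) (chain n Q hQ k).1 (chain n Q hQ k).2).choose_spec.2

lemma chain_range_mono (n : ℕ → ℕ) (Q : ℕ → ℕ) (hQ : ∀ k, 0 < Q k) {t j : ℕ} (h : t ≤ j) :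
    Set.range (chain n Q hQ j).1 ⊆ Set.range (chain n Q hQ t).1 := by
  induction j with
  | zero => simp_all
  | succ j ih =>
    rcases Nat.lt_or_ge t (j + 1) with h' | h'
    · exact ((chain_succ_spec n Q hQ j).2.1).trans (ih (by omega))
    · have : t = j + 1 := by omega
      subst this; exact fun x hx => hx

/-- counting elements of one residue class in a window -/
lemma card_filter_dvd (q M W : ℕ) (hq : 0 < q) (r : ℤ) :
    ((Finset.Ioc M (M + W)).filter (fun a : ℕ => (q : ℤ) ∣ (a : ℤ) - r)).card ≤ W / q + 1 := by
  classical
  have key : ((Finset.Ioc M (M + W)).filter (fun a : ℕ => (q : ℤ) ∣ (a : ℤ) - r)).card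
      ≤ (Finset.range (W / q + 1)).card := by
    apply Finset.card_le_card_of_injOn (fun a => (a - M - 1) / q)
    · intro a ha
      rw [Finset.mem_coe, Finset.mem_filter, Finset.mem_Ioc] at ha
      rw [Finset.mem_coe, Finset.mem_range]
      dsimp only
      have h1 : (a - M - 1) / q ≤ W / q := Nat.div_le_div_right (by omega)
      omega
    · intro a ha b hb hab
      have hab' : (a - M - 1) / q = (b - M - 1) / q := hab
      simp only [Finset.coe_filter, Set.mem_setOf_eq, Finset.mem_Ioc] at ha hb
      obtain ⟨⟨ha1, ha2⟩, hda⟩ := ha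
      obtain ⟨⟨hb1, hb2⟩, hdb⟩ := hb
      have hdvd : (q : ℤ) ∣ (a : ℤ) - (b : ℤ) := by
        have h := dvd_sub hda hdb
        simpa using h
      have hlt1 : a - M - 1 < (b - M - 1) + q := by
        by_contra hc
        push_neg at hc
        have h3 : ((b - M - 1) + q) / q ≤ (a - M - 1) / q := Nat.div_le_div_right hc
        rw [Nat.add_div_right _ hq] at h3
        omega
      have hlt2 : b - M - 1 < (a - M - 1) + q := by
        by_contra hc
        push_neg at hc
        have h3 : ((a - M - 1) + q) / q ≤ (b - M - 1) / q := Nat.div_le_div_right hc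
        rw [Nat.add_div_right _ hq] at h3
        omega
      have habs : |(a : ℤ) - (b : ℤ)| < q := by
        rw [abs_lt]
        constructor <;> push_cast <;> omega
      have := Int.eq_zero_of_abs_lt_dvd hdvd habs
      omega
  simpa using key

lemma density_zero_of_residue_cover (A : Set ℕ)
    (H : ∀ δ : ℝ, 0 < δ → ∃ q : ℕ, 0 < q ∧ ∃ R : Finset ℤ,
      (R.card : ℝ) ≤ δ * q ∧ ∀ a ∈ A, ∃ r ∈ R, (q : ℤ) ∣ (a : ℤ) - r) :
    upperBanachDensity A = 0 := by
  classical
  have hnn : ∀ N : {N : ℕ // 0 < N},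
      (0 : ℝ) ≤ ⨆ M : ℕ, ((A ∩ Set.Ioc M (M + (N : ℕ))).ncard : ℝ) / (N : ℕ) :=
    fun N => Real.iSup_nonneg fun M => by positivity
  have hbdd : BddBelow (Set.range fun N : {N : ℕ // 0 < N} =>
      ⨆ M : ℕ, ((A ∩ Set.Ioc M (M + (N : ℕ))).ncard : ℝ) / (N : ℕ)) :=
    ⟨0, by rintro _ ⟨N, rfl⟩; exact hnn N⟩
  have hge : (0 : ℝ) ≤ upperBanachDensity A := le_ciInf hnn
  have hle : ∀ ε : ℝ, 0 < ε → upperBanachDensity A ≤ ε := by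
    intro ε hε
    obtain ⟨q, hq, R, hRcard, hRcover⟩ := H (ε / 2) (by positivity)
    obtain ⟨W, hWgt⟩ := exists_nat_gt (max 1 ((R.card : ℝ) * (2 / ε)))
    have hW1 : (1 : ℝ) < W := lt_of_le_of_lt (le_max_left _ _) hWgt
    have hWpos : 0 < W := by
      have : 1 < W := by exact_mod_cast hW1
      omega
    have hWr : (0 : ℝ) < W := by exact_mod_cast hWpos
    have hq' : (0 : ℝ) < q := by exact_mod_cast hq
    have key : ∀ M : ℕ, ((A ∩ Set.Ioc M (M + W)).ncard : ℝ) / W ≤ ε := by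
      intro M
      have hsub : A ∩ Set.Ioc M (M + W) ⊆
          ↑(R.biUnion fun r =>
            (Finset.Ioc M (M + W)).filter (fun a : ℕ => (q : ℤ) ∣ (a : ℤ) - r)) := by
        rintro a ⟨haA, haI⟩
        obtain ⟨r, hrR, hdr⟩ := hRcover a haA
        simp only [Finset.coe_biUnion, Set.mem_iUnion, Finset.mem_coe, Finset.mem_filter,
          Finset.mem_Ioc]
        exact ⟨r, hrR, ⟨haI.1, haI.2⟩, hdr⟩
      have hcount : (A ∩ Set.Ioc M (M + W)).ncard ≤ R.card * (W / q + 1) := by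
        calc (A ∩ Set.Ioc M (M + W)).ncard
            ≤ (R.biUnion fun r =>
              (Finset.Ioc M (M + W)).filter (fun a : ℕ => (q : ℤ) ∣ (a : ℤ) - r)).card := by
              rw [← Set.ncard_coe_finset]
              exact Set.ncard_le_ncard hsub (Finset.finite_toSet _)
          _ ≤ ∑ r ∈ R,
              ((Finset.Ioc M (M + W)).filter (fun a : ℕ => (q : ℤ) ∣ (a : ℤ) - r)).card :=
              Finset.card_biUnion_le
          _ ≤ ∑ _r ∈ R, (W / q + 1) := Finset.sum_le_sum fun r _ => card_filter_dvd q M W hq r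
          _ = R.card * (W / q + 1) := by rw [Finset.sum_const, smul_eq_mul]
      have c1 : ((A ∩ Set.Ioc M (M + W)).ncard : ℝ) ≤ (R.card : ℝ) * ((W : ℝ) / q + 1) := by
        calc ((A ∩ Set.Ioc M (M + W)).ncard : ℝ) ≤ ((R.card * (W / q + 1) : ℕ) : ℝ) := by
              exact_mod_cast hcount
          _ ≤ (R.card : ℝ) * ((W : ℝ) / q + 1) := by
              push_cast
              gcongr
              exact Nat.cast_div_le
      have e1 : (R.card : ℝ) ≤ ε / 2 * q := hRcard
      have e2 : (R.card : ℝ) < ε / 2 * W := by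
        have h := lt_of_le_of_lt (le_max_right 1 ((R.card : ℝ) * (2 / ε))) hWgt
        have h2 : (R.card : ℝ) = (R.card * (2 / ε)) * (ε / 2) := by
          field_simp
        rw [h2]
        calc ((R.card : ℝ) * (2 / ε)) * (ε / 2) < (W : ℝ) * (ε / 2) := by
              apply mul_lt_mul_of_pos_right h
              positivity
          _ = ε / 2 * W := by ring
      have hx : (q : ℝ) * ((W : ℝ) / q) = W := mul_div_cancel₀ _ (ne_of_gt hq')
      have hxnn : (0 : ℝ) ≤ (W : ℝ) / q := by positivity
      rw [div_le_iff₀ hWr]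
      calc ((A ∩ Set.Ioc M (M + W)).ncard : ℝ) ≤ (R.card : ℝ) * ((W : ℝ) / q + 1) := c1
        _ ≤ ε * W := by nlinarith [mul_le_mul_of_nonneg_right e1 hxnn]
    have hfin : upperBanachDensity A ≤ ⨆ M : ℕ, ((A ∩ Set.Ioc M (M + W)).ncard : ℝ) / W :=
      ciInf_le hbdd ⟨W, hWpos⟩
    exact hfin.trans (ciSup_le key)
  have hle0 : upperBanachDensity A ≤ 0 := le_of_forall_pos_le_add (by simpa using hle)
  linarith

/-- Every `Δ_ℓ` set contains a `Δ_ℓ` set of zero upper Banach density: the `ℓ`-th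
difference set of any strictly increasing sequence contains, for some subsequence, an
`ℓ`-th difference set of upper Banach density zero. -/
theorem Delta_ell_contains_null_Delta_ell (ℓ : ℕ) (hℓ : 1 ≤ ℓ) (n : ℕ → ℕ)
    (hmono : StrictMono n) :
    ∃ m : ℕ → ℕ, StrictMono m ∧
      Dset ℓ (fun i => (n (m i) : ℤ)) ⊆ Dset ℓ (fun i => (n i : ℤ)) ∧
      upperBanachDensity {a : ℕ | (a : ℤ) ∈ Dset ℓ (fun i => (n (m i) : ℤ))} = 0 := by
  classical
  set E : ℕ := 2 ^ ℓ with hE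
  have hEpos : 0 < E := by rw [hE]; positivity
  set Q : ℕ → ℕ := fun t => (Nat.factorial (t + 1)) ^ (E + 1) with hQdef
  have hQpos : ∀ t, 0 < Q t := fun t => pow_pos (Nat.factorial_pos _) _
  set m : ℕ → ℕ := fun k => (chain n Q hQpos (k + 1)).1 k with hm
  have hmmono : StrictMono m := by
    apply strictMono_nat_of_lt_succ
    intro k
    have h1 : (chain n Q hQpos (k + 1)).1 (k + 1) ≤ (chain n Q hQpos (k + 2)).1 (k + 1) :=
      (chain_succ_spec n Q hQpos (k + 1)).1 (k + 1)
    have h2 : (chain n Q hQpos (k + 1)).1 k < (chain n Q hQpos (k + 1)).1 (k + 1) :=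
      (chain n Q hQpos (k + 1)).2 (Nat.lt_succ_self k)
    exact lt_of_lt_of_le h2 h1
  set N : ℕ → ℤ := fun k => (n (m k) : ℤ) with hN
  have hcong : ∀ t j : ℕ, t ≤ j → (Q t : ℤ) ∣ N j - N t := by
    intro t j htj
    have hjm : m j ∈ Set.range (chain n Q hQpos (t + 1)).1 := by
      apply chain_range_mono n Q hQpos (Nat.succ_le_succ htj)
      exact ⟨j, rfl⟩
    obtain ⟨x, hx⟩ := hjm
    have hdvd := (chain_succ_spec n Q hQpos t).2.2 x t
    rw [hx] at hdvd
    exact hdvd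
  refine ⟨m, hmmono, ?_, ?_⟩
  · rintro z ⟨k, hk, rfl⟩
    exact ⟨m ∘ k, hmmono.comp hk, rfl⟩
  · apply density_zero_of_residue_cover
    intro δ hδ
    obtain ⟨t, ht⟩ := exists_nat_gt (1 / δ)
    refine ⟨Q t, hQpos t, ?_⟩
    set R : Finset ℤ := Finset.image
      (fun c : Fin E → Fin (t + 1) =>
        ∑ i ∈ Finset.range E, eps ℓ i * N (c ⟨i % E, Nat.mod_lt _ hEpos⟩))
      Finset.univ with hR
    refine ⟨R, ?_, ?_⟩
    · have hcard : R.card ≤ (t + 1) ^ E := by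
        calc R.card ≤ (Finset.univ : Finset (Fin E → Fin (t + 1))).card := Finset.card_image_le
          _ = (t + 1) ^ E := by simp [Finset.card_univ]
      have hQge : (t + 1) ^ (E + 1) ≤ Q t := by
        rw [hQdef]
        exact Nat.pow_le_pow_left (Nat.self_le_factorial _) _
      have hc1 : (R.card : ℝ) ≤ ((t : ℝ) + 1) ^ E := by exact_mod_cast hcard
      have hc2 : ((t : ℝ) + 1) ^ (E + 1) ≤ (Q t : ℝ) := by exact_mod_cast hQge
      have hδt : 1 ≤ δ * ((t : ℝ) + 1) := by
        rw [div_lt_iff₀ hδ] at ht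
        nlinarith
      calc (R.card : ℝ) ≤ ((t : ℝ) + 1) ^ E := hc1
        _ = 1 * ((t : ℝ) + 1) ^ E := (one_mul _).symm
        _ ≤ (δ * ((t : ℝ) + 1)) * ((t : ℝ) + 1) ^ E := by
            apply mul_le_mul_of_nonneg_right hδt (by positivity)
        _ = δ * ((t : ℝ) + 1) ^ (E + 1) := by ring
        _ ≤ δ * Q t := mul_le_mul_of_nonneg_left hc2 hδ.le
    · rintro a ⟨k, hk, hz⟩
      set c : Fin E → Fin (t + 1) := fun i => ⟨min (k i) t, by omega⟩ with hc
      refine ⟨∑ i ∈ Finset.range E, eps ℓ i * N (c ⟨i % E, Nat.mod_lt _ hEpos⟩),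
        Finset.mem_image_of_mem _ (Finset.mem_univ c), ?_⟩
      rw [hz, del_eq_sum, ← hE, ← Finset.sum_sub_distrib]
      apply Finset.dvd_sum
      intro i hi
      rw [Finset.mem_range] at hi
      have hiE : i % E = i := Nat.mod_eq_of_lt hi
      rw [← mul_sub]
      refine Dvd.dvd.mul_left ?_ _
      show (Q t : ℤ) ∣ N (k i) - N (min (k (i % E)) t)
      rw [hiE]
      rcases le_or_gt (k i) t with hkt | hkt
      · rw [min_eq_left hkt]; simp
      · rw [min_eq_right hkt.le]; exact hcong t (k i) hkt.le
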